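/- For every integer n ≥ 0 and x ∈ (-1,1), one has (1 + x) |P_n'(x)| ≤ n(n+1). -/

import Mathlib

noncomputable def legendreP (n : ℕ) (x : ℝ) : ℝ :=
  (1 / ((2:ℝ) ^ n * n.factorial)) * iteratedDeriv n (fun y : ℝ => (y ^ 2 - 1) ^ n) x

open Polynomial Finset

lemma iter3_zero (k : ℕ) : (derivative^[k+3] ((X:ℝ[X])^2 - 1)) = 0 := by
  induction k with
  | zero => simp [Function.iterate_succ_apply', derivative_sub, derivative_one, derivative_X_pow]
  | succ k ih => rw [Function.iterate_succ_apply', ih]; simp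

lemma L1 (q : ℝ[X]) (k : ℕ) :
    derivative^[k+2] (q * ((X:ℝ[X])^2 - 1)) =
      derivative^[k+2] q * ((X:ℝ[X])^2 - 1)
      + (((k:ℝ[X]) + 2)) * (derivative^[k+1] q * (2 * X))
      + (((k+2).choose 2 : ℕ) : ℝ[X]) * (derivative^[k] q * 2) := by
  rw [iterate_derivative_mul]
  rw [show (k+2).succ = (k+2)+1 from rfl]
  rw [Finset.sum_range_succ', Finset.sum_range_succ', Finset.sum_range_succ']
  rw [Finset.sum_eq_zero (fun i _ => by
    rw [show i + 1 + 1 + 1 = i + 3 from rfl, iter3_zero]; simp)]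
  simp only [nsmul_eq_mul]
  have h0 : derivative^[0] ((X:ℝ[X])^2 - 1) = (X:ℝ[X])^2 - 1 := rfl
  have h1 : derivative^[1] ((X:ℝ[X])^2 - 1) = 2 * X := by
    simp [derivative_sub, derivative_one, derivative_X_pow, map_ofNat]; norm_num
  have h2 : derivative^[2] ((X:ℝ[X])^2 - 1) = 2 := by
    rw [Function.iterate_succ_apply' (⇑derivative) 1, h1]
    simp [derivative_mul, map_ofNat]
  rw [h0, h1, h2]
  simp [Nat.choose_one_right]
  ring

lemma iter2_zero (k : ℕ) (a : ℝ) : (derivative^[k+2] (C a * (X:ℝ[X]))) = 0 := by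
  induction k with
  | zero =>
    rw [Function.iterate_succ_apply' (⇑derivative) 1]
    simp [derivative_C_mul_X]
  | succ k ih => rw [Function.iterate_succ_apply', ih]; simp

lemma L2 (q : ℝ[X]) (a : ℝ) (k : ℕ) :
    derivative^[k+1] (q * (C a * (X:ℝ[X]))) =
      derivative^[k+1] q * (C a * X) + ((k:ℝ[X]) + 1) * (derivative^[k] q * C a) := by
  rw [iterate_derivative_mul]
  rw [show (k+1).succ = (k+1)+1 from rfl]
  rw [Finset.sum_range_succ', Finset.sum_range_succ']
  rw [Finset.sum_eq_zero (fun i _ => by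
    rw [show i + 1 + 1 = i + 2 from rfl, iter2_zero]; simp)]
  simp only [nsmul_eq_mul]
  have h1 : derivative^[1] (C a * (X:ℝ[X])) = C a := by simp [derivative_C_mul_X]
  rw [h1, show derivative^[0] (C a * (X:ℝ[X])) = C a * X from rfl]
  simp [Nat.choose_one_right]
  ring

lemma hbase (n : ℕ) (hn : 1 ≤ n) :
    derivative (((X:ℝ[X])^2 - 1)^n) * ((X:ℝ[X])^2 - 1)
      = (((X:ℝ[X])^2 - 1)^n) * (C (2*(n:ℝ)) * X) := by
  rw [derivative_pow]
  have hd : derivative ((X:ℝ[X])^2 - 1) = 2 * X := by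
    simp [derivative_sub, derivative_one, derivative_X_pow, map_ofNat]; norm_num
  rw [hd]
  have hp : ((X:ℝ[X])^2 - 1)^(n-1) * ((X:ℝ[X])^2 - 1) = ((X:ℝ[X])^2 - 1)^n := by
    rw [← pow_succ, Nat.sub_add_cancel hn]
  calc C (n:ℝ) * ((X:ℝ[X])^2 - 1)^(n-1) * (2*X) * ((X:ℝ[X])^2 - 1)
      = (((X:ℝ[X])^2 - 1)^(n-1) * ((X:ℝ[X])^2 - 1)) * (C (n:ℝ) * (2*X)) := by ring
    _ = (((X:ℝ[X])^2 - 1)^n) * (C (2*(n:ℝ)) * X) := by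
        rw [hp]; rw [show C (2*(n:ℝ)) = 2 * C (n:ℝ) by rw [map_mul, map_ofNat]]; ring

noncomputable def Rpoly (n : ℕ) : ℝ[X] := derivative^[n] (((X:ℝ[X])^2 - 1)^n)

lemma L2' (q : ℝ[X]) (a : ℝ) (k : ℕ) :
    derivative^[k+2] (q * (C a * (X:ℝ[X]))) =
      derivative^[k+2] q * (C a * X) + ((k:ℝ[X]) + 2) * (derivative^[k+1] q * C a) := by
  have h := L2 q a (k+1)
  rw [show k+1+1 = k+2 from rfl] at h
  rw [h]
  push_cast
  ring

lemma legendre_ode (n : ℕ) :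
    (1 - (X:ℝ[X])^2) * derivative (derivative (Rpoly n)) - 2 * X * derivative (Rpoly n)
      + ((n:ℝ[X]) * ((n:ℝ[X]) + 1)) * Rpoly n = 0 := by
  cases n with
  | zero => simp [Rpoly]
  | succ m =>
    set u : ℝ[X] := ((X:ℝ[X])^2 - 1)^(m+1) with hu
    have E := congrArg (fun p : ℝ[X] => derivative^[m+2] p) (hbase (m+1) (Nat.le_add_left 1 m))
    beta_reduce at E
    rw [L1 (derivative u) m, L2' u (2*((m+1:ℕ):ℝ)) m] at E
    have hch : 2 * ((((m+2).choose 2 : ℕ)) : ℝ[X]) = ((m:ℝ[X])+2) * ((m:ℝ[X])+1) := by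
      have h2 : 2 * ((m+2).choose 2) = (m+2)*(m+1) := by
        rw [Nat.choose_two_right, show m+2-1 = m+1 from rfl]
        obtain ⟨r, hr⟩ := Nat.even_mul_succ_self (m+1)
        rw [Nat.mul_div_cancel' ⟨r, by rw [mul_comm (m+2) (m+1), hr, two_mul]⟩]
      calc 2 * ((((m+2).choose 2 : ℕ)) : ℝ[X]) = ((2 * (m+2).choose 2 : ℕ) : ℝ[X]) := by push_cast; ring
        _ = (((m+2)*(m+1) : ℕ) : ℝ[X]) := by rw [h2]
        _ = ((m:ℝ[X])+2) * ((m:ℝ[X])+1) := by push_cast; ring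
    have hCa : (C (2*((m+1:ℕ):ℝ)) : ℝ[X]) = 2*((m:ℝ[X])+1) := by
      rw [map_mul, map_ofNat, Polynomial.C_eq_natCast]
      push_cast
      ring
    rw [hCa] at E
    simp only [← Function.iterate_succ_apply] at E
    have hR : Rpoly (m+1) = derivative^[m+1] u := rfl
    rw [hR]
    simp only [Function.iterate_succ_apply'] at E ⊢
    push_cast
    linear_combination (-1 : ℝ[X]) * E + (derivative ((derivative^[m]) u)) * hch

lemma hfac (n : ℕ) : ((X:ℝ[X])^2-1)^n = (X - C 1)^n * (X + C 1)^n := by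
  rw [← mul_pow]; congr 1; simp only [C_1]; ring

lemma eval_R_one (n : ℕ) : eval 1 (Rpoly n) = 2^n * n.factorial := by
  rw [Rpoly, hfac, iterate_derivative_mul, eval_finset_sum]
  rw [Finset.sum_eq_single 0]
  · simp only [Nat.choose_zero_right, one_smul, Nat.sub_zero, Function.iterate_zero, id_eq,
      iterate_derivative_X_sub_pow_self, eval_mul, eval_natCast, eval_pow, eval_add, eval_X,
      eval_one]
    norm_num
    ring
  · intro k hk hk0
    rw [iterate_derivative_X_sub_pow]
    have hkn : k ≤ n := Nat.lt_succ_iff.mp (Finset.mem_range.mp hk)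
    rw [Nat.sub_sub_self hkn]
    simp [eval_smul, eval_pow, zero_pow hk0]
  · intro h
    exact absurd (Finset.mem_range.mpr (Nat.succ_pos n)) h

lemma eval_R_negone (n : ℕ) : eval (-1) (Rpoly n) = (-2)^n * n.factorial := by
  rw [Rpoly, hfac, iterate_derivative_mul, eval_finset_sum]
  rw [Finset.sum_eq_single n]
  · simp only [Nat.choose_self, one_smul, Nat.sub_self, Function.iterate_zero, id_eq,
      iterate_derivative_X_add_pow, eval_mul, eval_smul, eval_pow, eval_sub, eval_add, eval_X,
      eval_one, Nat.descFactorial_self, smul_eq_mul]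
    norm_num
  · intro k hk hkn
    rw [iterate_derivative_X_add_pow]
    have hkn' : k < n := lt_of_le_of_ne (Nat.lt_succ_iff.mp (Finset.mem_range.mp hk)) hkn
    have : 0 < n - k := Nat.sub_pos_of_lt hkn'
    simp [eval_smul, eval_pow, zero_pow this.ne']
  · intro h
    exact absurd (Finset.mem_range.mpr (Nat.lt_succ_self n)) h

noncomputable def Ppoly (n : ℕ) : ℝ[X] := C ((1:ℝ) / ((2:ℝ)^n * n.factorial)) * Rpoly n

lemma iteratedDeriv_polyeval (q : ℝ[X]) (k : ℕ) :
    iteratedDeriv k (fun y : ℝ => eval y q) = fun x => eval x (derivative^[k] q) := by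
  induction k with
  | zero => simp
  | succ k ih =>
    rw [iteratedDeriv_succ, ih]
    funext x
    rw [Polynomial.deriv, ← Function.iterate_succ_apply' (⇑derivative) k q]

lemma legendreP_eq (n : ℕ) : legendreP n = fun x => eval x (Ppoly n) := by
  funext x
  rw [legendreP, Ppoly, eval_mul, eval_C, Rpoly]
  congr 1
  have : (fun y : ℝ => (y ^ 2 - 1) ^ n) = fun y : ℝ => eval y (((X:ℝ[X])^2 - 1)^n) := by
    funext y; simp
  rw [this, iteratedDeriv_polyeval]

lemma fact_ne : ∀ n : ℕ, ((2:ℝ)^n * n.factorial) ≠ 0 := fun n =>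
  mul_ne_zero (pow_ne_zero _ two_ne_zero) (Nat.cast_ne_zero.mpr n.factorial_ne_zero)

lemma eval_P_one (n : ℕ) : eval 1 (Ppoly n) = 1 := by
  rw [Ppoly, eval_mul, eval_C, eval_R_one]
  field_simp

lemma eval_P_negone (n : ℕ) : eval (-1) (Ppoly n) = (-1)^n := by
  rw [Ppoly, eval_mul, eval_C, eval_R_negone]
  rw [show ((-2:ℝ))^n = (-1)^n * 2^n by rw [← neg_one_mul, mul_pow]]
  field_simp

lemma legendre_odeP (n : ℕ) :
    (1 - (X:ℝ[X])^2) * derivative (derivative (Ppoly n)) - 2 * X * derivative (Ppoly n)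
      + ((n:ℝ[X]) * ((n:ℝ[X]) + 1)) * Ppoly n = 0 := by
  rw [Ppoly, derivative_C_mul, derivative_C_mul]
  linear_combination (C ((1:ℝ) / ((2:ℝ)^n * n.factorial))) * legendre_ode n

theorem legendre_deriv_bound (n : ℕ) (x : ℝ) (hx : x ∈ Set.Ioo (-1:ℝ) 1) :
    (1 + x) * |deriv (legendreP n) x| ≤ (n : ℝ) * (n + 1) := by
  obtain ⟨hx1, hx2⟩ := hx
  have hderiv : deriv (legendreP n) x = eval x (derivative (Ppoly n)) := by
    rw [legendreP_eq, Polynomial.deriv]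
  rcases Nat.eq_zero_or_pos n with hn | hn
  · subst hn
    have h0 : derivative (Ppoly 0) = 0 := by
      simp [Ppoly, Rpoly]
    rw [hderiv, h0]
    simp
  -- setup
  set q : ℝ[X] := Ppoly n with hq
  set N : ℝ := (n:ℝ) * ((n:ℝ) + 1) with hN
  have hNpos : 0 < N := by
    have : (1:ℝ) ≤ (n:ℝ) := by exact_mod_cast hn
    nlinarith
  have hCN : C N = (n:ℝ[X]) * ((n:ℝ[X]) + 1) := by
    rw [hN, map_mul, map_add, map_one, Polynomial.C_eq_natCast]
  have hodeC : (1 - (X:ℝ[X])^2) * derivative (derivative q) - 2 * X * derivative q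
      + C N * q = 0 := by
    rw [hCN]; exact legendre_odeP n
  set F : ℝ[X] := C N * q^2 + (1 - (X:ℝ[X])^2) * (derivative q)^2 with hF
  have hF' : derivative F = 2 * X * (derivative q)^2 := by
    rw [hF]
    simp only [derivative_add, derivative_mul, derivative_pow, derivative_C_mul,
      derivative_one, derivative_sub, derivative_X, derivative_X_pow, derivative_C,
      Nat.cast_ofNat, map_ofNat, pow_one]
    push_cast
    linear_combination (2 * derivative q) * hodeC
  set f : ℝ → ℝ := fun t => eval t F with hf
  have hdf : ∀ t : ℝ, deriv f t = 2 * t * (eval t (derivative q))^2 := by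
    intro t
    rw [hf]
    rw [Polynomial.deriv, hF']
    simp [eval_mul, eval_pow]
  have hf1 : f 1 = N := by
    show eval 1 F = N
    rw [hF]
    simp only [eval_add, eval_mul, eval_C, eval_pow, eval_sub, eval_one, eval_X]
    rw [show eval 1 q = 1 from eval_P_one n]
    ring
  have hfneg1 : f (-1) = N := by
    show eval (-1) F = N
    rw [hF]
    simp only [eval_add, eval_mul, eval_C, eval_pow, eval_sub, eval_one, eval_X]
    rw [show eval (-1) q = (-1)^n from eval_P_negone n]
    rw [← pow_mul, mul_comm n 2, pow_mul]
    norm_num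
  have hcont : ContinuousOn f (Set.Icc (-1:ℝ) 1) := (Polynomial.continuous F).continuousOn
  have hcont2 : ContinuousOn f (Set.Icc (0:ℝ) 1) := (Polynomial.continuous F).continuousOn
  have hdiff : ∀ s : Set ℝ, DifferentiableOn ℝ f s := fun s => (Polynomial.differentiable F).differentiableOn
  have hmono : MonotoneOn f (Set.Icc (0:ℝ) 1) := by
    apply monotoneOn_of_deriv_nonneg (convex_Icc 0 1) hcont2 (hdiff _)
    intro t ht
    rw [interior_Icc] at ht
    rw [hdf]
    nlinarith [sq_nonneg (eval t (derivative q)), ht.1]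
  have hanti : AntitoneOn f (Set.Icc (-1:ℝ) 0) := by
    apply antitoneOn_of_deriv_nonpos (convex_Icc (-1) 0) ((Polynomial.continuous F).continuousOn) (hdiff _)
    intro t ht
    rw [interior_Icc] at ht
    rw [hdf]
    nlinarith [sq_nonneg (eval t (derivative q)), ht.2]
  have hfle : ∀ t ∈ Set.Icc (-1:ℝ) 1, f t ≤ N := by
    intro t ht
    rcases le_total t 0 with h | h
    · calc f t ≤ f (-1) := hanti (Set.mem_Icc.mpr ⟨le_refl _, by linarith⟩)
            (Set.mem_Icc.mpr ⟨ht.1, h⟩) ht.1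
        _ = N := hfneg1
    · calc f t ≤ f 1 := hmono (Set.mem_Icc.mpr ⟨h, ht.2⟩)
            (Set.mem_Icc.mpr ⟨zero_le_one, le_refl _⟩) ht.2
        _ = N := hf1
  have hPle : ∀ t ∈ Set.Icc (-1:ℝ) 1, |eval t q| ≤ 1 := by
    intro t ht
    have h1 : N * (eval t q)^2 + (1 - t^2) * (eval t (derivative q))^2 ≤ N := by
      have := hfle t ht
      rw [hf, hF] at this
      simpa [eval_mul, eval_pow, eval_add, eval_sub, eval_one, eval_C] using this
    have h2 : (1 - t^2) * (eval t (derivative q))^2 ≥ 0 := by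
      have ht1 : t^2 ≤ 1 := by
        rw [← one_pow 2]
        exact sq_le_sq' (by linarith [ht.1]) ht.2
      nlinarith [sq_nonneg (eval t (derivative q))]
    have h3 : (eval t q)^2 ≤ 1 := by nlinarith
    exact (sq_le_one_iff_abs_le_one _).mp h3
  -- the function g = (1-t^2) q'(t)
  set G : ℝ[X] := (1 - (X:ℝ[X])^2) * derivative q with hG
  have hG' : derivative G = - (C N * q) := by
    rw [hG]
    simp only [derivative_mul, derivative_sub, derivative_one, derivative_X_pow,
      Nat.cast_ofNat, map_ofNat, pow_one]
    push_cast
    linear_combination hodeC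
  set g : ℝ → ℝ := fun t => eval t G with hg
  have hdg : ∀ t : ℝ, deriv g t = -(N * eval t q) := by
    intro t
    rw [hg, Polynomial.deriv, hG']
    simp
  have hgbd : ∀ t ∈ Set.Icc (-1:ℝ) 1, ‖deriv g t‖ ≤ N := by
    intro t ht
    rw [hdg, norm_neg, norm_mul, Real.norm_eq_abs, Real.norm_eq_abs, abs_of_pos hNpos]
    calc N * |eval t q| ≤ N * 1 := by
          exact mul_le_mul_of_nonneg_left (hPle t ht) hNpos.le
      _ = N := mul_one N
  have hmvt : ‖g x - g 1‖ ≤ N * ‖x - 1‖ := by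
    apply Convex.norm_image_sub_le_of_norm_deriv_le
      (fun t _ => (Polynomial.differentiable G).differentiableAt) hgbd (convex_Icc (-1) 1)
    · exact Set.mem_Icc.mpr ⟨by linarith, le_refl _⟩
    · exact Set.mem_Icc.mpr ⟨hx1.le, hx2.le⟩
  have hg1 : g 1 = 0 := by rw [hg, hG]; simp
  have hgx : g x = (1 - x^2) * eval x (derivative q) := by rw [hg, hG]; simp
  rw [hg1, sub_zero, hgx] at hmvt
  have hxnorm : ‖x - 1‖ = 1 - x := by rw [Real.norm_eq_abs, abs_of_neg (by linarith)]; ring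
  rw [hxnorm, Real.norm_eq_abs] at hmvt
  -- conclude
  rw [hderiv]
  have hfactor : |(1 - x^2) * eval x (derivative q)| = (1-x) * ((1+x) * |eval x (derivative q)|) := by
    rw [abs_mul]
    rw [abs_of_pos (by nlinarith : (0:ℝ) < 1 - x^2)]
    ring
  rw [hfactor] at hmvt
  have h1x : 0 < 1 - x := by linarith
  exact (mul_le_mul_iff_right₀ h1x).mp (by linarith [hmvt])
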